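/- arXiv:2108.06058 — 2 statements merged into one kernel-verified Lean document; each statement's English description precedes it below -/
import Mathlib

section
/- Let (Ω, d) be a metric space, X a random vector in ℝ^p, Y a random element of Ω, θ₀ ∈ ℝ^p, and for each unit vector θ let g(·, θ) : ℝ → Ω satisfy: g(θ'x, θ) minimizes ω ↦ E[d²(Y, ω) | θ'X = θ'x] uniquely for each x. Define W(θ) = E[d²(Y, g(θ'X, θ))]. Then W(θ₀) ≤ W(θ) for every unit vector θ, i.e., θ₀ minimizes W. [Here assume the single index model E-characterization: E[d²(Y, ω)|X = x] is minimized at g(θ₀'x, θ₀) for all x.] -/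
open MeasureTheory ProbabilityTheory

section Aux

variable {α : Type*} [MeasurableSpace α]
    {Ω : Type*} [MetricSpace Ω] [MeasurableSpace Ω] [BorelSpace Ω] [PolishSpace Ω] [Nonempty Ω]
    {β : Type*} [MeasurableSpace β] [StandardBorelSpace β] [Nonempty β]

lemma aux_integrable (hbdd : Bornology.IsBounded (Set.univ : Set Ω))
    (ν : Measure (β × Ω)) [IsProbabilityMeasure ν] (h : β → Ω) (hh : Measurable h) :
    Integrable (fun q : β × Ω => dist q.2 (h q.1) ^ 2) ν := by
  refine (integrable_const ((Metric.diam (Set.univ : Set Ω)) ^ 2)).mono' ?_ ?_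
  · exact ((measurable_dist.comp ((measurable_snd).prodMk (hh.comp measurable_fst))).pow_const
      2).aestronglyMeasurable
  · refine Filter.Eventually.of_forall fun q => ?_
    rw [Real.norm_eq_abs, abs_of_nonneg (by positivity)]
    have hd : dist q.2 (h q.1) ≤ Metric.diam (Set.univ : Set Ω) :=
      Metric.dist_le_diam_of_mem hbdd (Set.mem_univ _) (Set.mem_univ _)
    exact pow_le_pow_left₀ dist_nonneg hd 2

lemma aux_tower (hbdd : Bornology.IsBounded (Set.univ : Set Ω))
    (μ : Measure α) [IsProbabilityMeasure μ]
    (X : α → β) (Y : α → Ω) (hX : Measurable X) (hY : Measurable Y)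
    (h : β → Ω) (hh : Measurable h) :
    ∫ a, dist (Y a) (h (X a)) ^ 2 ∂μ
      = ∫ a, ∫ y, dist y (h (X a)) ^ 2 ∂(condDistrib Y X μ (X a)) ∂μ := by
  have hmap : IsProbabilityMeasure (μ.map fun a => (X a, Y a)) :=
    Measure.isProbabilityMeasure_map (hX.prodMk hY).aemeasurable
  have hint : Integrable (fun q : β × Ω => dist q.2 (h q.1) ^ 2)
      (μ.map fun a => (X a, Y a)) := aux_integrable hbdd _ h hh
  have htower := condExp_prod_ae_eq_integral_condDistrib'
    (μ := μ) (X := X) (Y := Y) hX hY.aemeasurable hint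
  calc ∫ a, dist (Y a) (h (X a)) ^ 2 ∂μ
      = ∫ a, (μ[fun a => dist (Y a) (h (X a)) ^ 2 | MeasurableSpace.comap X inferInstance]) a ∂μ :=
        (integral_condExp hX.comap_le).symm
    _ = ∫ a, ∫ y, dist y (h (X a)) ^ 2 ∂(condDistrib Y X μ (X a)) ∂μ :=
        integral_congr_ae htower

end Aux

/-- In the Fréchet single index model, `θ₀` minimizes `W(θ) = E[d²(Y, g(θ'X, θ))]` over unit
vectors `θ`, where `g(θ'x, θ)` minimizes `ω ↦ E[d²(Y, ω) | θ'X = θ'x]` and (single index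
assumption) `g(θ₀'x, θ₀)` minimizes `ω ↦ E[d²(Y, ω) | X = x]`. -/
theorem stmt_7 {α : Type*} [MeasurableSpace α]
    {Ω : Type*} [MetricSpace Ω] [MeasurableSpace Ω] [BorelSpace Ω] [PolishSpace Ω] [Nonempty Ω]
    (hbdd : Bornology.IsBounded (Set.univ : Set Ω))
    (μ : Measure α) [IsProbabilityMeasure μ] (p : ℕ)
    (X : α → (Fin p → ℝ)) (Y : α → Ω) (hX : Measurable X) (hY : Measurable Y)
    (g : (Fin p → ℝ) → ℝ → Ω) (hgmeas : ∀ θ : Fin p → ℝ, Measurable (g θ))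
    (θ₀ : Fin p → ℝ) (hθ₀ : ‖θ₀‖ = 1)
    -- for each unit θ and each x, g(θ'x, θ) uniquely minimizes ω ↦ E[d²(Y, ω) | θ'X = θ'x]
    (hg : ∀ θ : Fin p → ℝ, ‖θ‖ = 1 → ∀ x : Fin p → ℝ, ∀ ω : Ω,
      ω ≠ g θ (∑ j, θ j * x j) →
      (∫ y, dist y (g θ (∑ j, θ j * x j)) ^ 2
          ∂((condDistrib Y (fun a => ∑ j, θ j * X a j) μ) (∑ j, θ j * x j)))
        < ∫ y, dist y ω ^ 2
          ∂((condDistrib Y (fun a => ∑ j, θ j * X a j) μ) (∑ j, θ j * x j)))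
    -- single index model: g(θ₀'x, θ₀) minimizes ω ↦ E[d²(Y, ω) | X = x] for all x
    (h0 : ∀ x : Fin p → ℝ, ∀ ω : Ω,
      (∫ y, dist y (g θ₀ (∑ j, θ₀ j * x j)) ^ 2 ∂((condDistrib Y X μ) x))
        ≤ ∫ y, dist y ω ^ 2 ∂((condDistrib Y X μ) x)) :
    ∀ θ : Fin p → ℝ, ‖θ‖ = 1 →
      (∫ a, dist (Y a) (g θ₀ (∑ j, θ₀ j * X a j)) ^ 2 ∂μ)
        ≤ ∫ a, dist (Y a) (g θ (∑ j, θ j * X a j)) ^ 2 ∂μ := by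
  intro θ hθ
  -- measurability of the composed maps x ↦ g θ (θ'x)
  have hsum : ∀ η : Fin p → ℝ, Measurable fun x : Fin p → ℝ => ∑ j, η j * x j := fun η =>
    Finset.measurable_sum _ fun j _ => (measurable_pi_apply j).const_mul _
  have hmap : IsProbabilityMeasure (μ.map fun a => (X a, Y a)) :=
    Measure.isProbabilityMeasure_map (hX.prodMk hY).aemeasurable
  have hh : ∀ η : Fin p → ℝ, Measurable fun x : Fin p → ℝ => g η (∑ j, η j * x j) := fun η =>
    (hgmeas η).comp (hsum η)
  have key : ∀ η : Fin p → ℝ,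
      ∫ a, dist (Y a) (g η (∑ j, η j * X a j)) ^ 2 ∂μ
        = ∫ a, ∫ y, dist y (g η (∑ j, η j * X a j)) ^ 2 ∂(condDistrib Y X μ (X a)) ∂μ := fun η =>
    aux_tower hbdd μ X Y hX hY _ (hh η)
  rw [key θ₀, key θ]
  refine integral_mono ?_ ?_ fun a => h0 (X a) _
  · exact (aux_integrable hbdd _ _ (hh θ₀)).integral_condDistrib hX.aemeasurable hY.aemeasurable
  · exact (aux_integrable hbdd _ _ (hh θ)).integral_condDistrib hX.aemeasurable hY.aemeasurable
end

section
/- With the setup of the previous statement (W(θ) = E[d²(Y, g(θ'X, θ))] and g(θ₀'X, θ₀) the conditional Fréchet mean given X), if additionally P(g(θ'X, θ) ≠ g(θ₀'X, θ₀)) > 0 for every unit vector θ ≠ θ₀, and for each x the minimizer of ω ↦ E[d²(Y, ω)|X = x] is unique with strict inequality E[d²(Y,ω)|X=x] > E[d²(Y, m(x))|X=x] for ω ≠ m(x), then W(θ) > W(θ₀) for all θ ≠ θ₀, i.e., θ₀ is the unique minimizer of W. -/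
open MeasureTheory ProbabilityTheory

lemma stmt8_key {α : Type*} [MeasurableSpace α]
    {Ω : Type*} [MetricSpace Ω] [MeasurableSpace Ω] [BorelSpace Ω] [PolishSpace Ω] [Nonempty Ω]
    {C : ℝ} (hC : ∀ y ω : Ω, dist y ω ≤ C)
    (μ : Measure α) [IsProbabilityMeasure μ] {β : Type*} [MeasurableSpace β]
    [StandardBorelSpace β] [Nonempty β]
    (X : α → β) (Y : α → Ω) (hX : Measurable X) (hY : Measurable Y)
    (F : β → Ω) (hF : Measurable F) :
    ∫ a, dist (Y a) (F (X a)) ^ 2 ∂μ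
      = ∫ x, ∫ y, dist y (F x) ^ 2 ∂(condDistrib Y X μ x) ∂(μ.map X) := by
  have hCnn : (0:ℝ) ≤ C := le_trans dist_nonneg (hC Classical.ofNonempty Classical.ofNonempty)
  set ρ : Measure (β × Ω) := μ.map (fun a => (X a, Y a)) with hρ
  haveI : IsProbabilityMeasure ρ := Measure.isProbabilityMeasure_map (hX.prodMk hY).aemeasurable
  have hfmeas : Measurable (fun q : β × Ω => dist q.2 (F q.1) ^ 2) := by
    exact ((measurable_dist.comp (measurable_snd.prodMk (hF.comp measurable_fst)))).pow_const 2
  have hint : Integrable (fun q : β × Ω => dist q.2 (F q.1) ^ 2) ρ := by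
    refine (integrable_const (C ^ 2)).mono' hfmeas.aestronglyMeasurable ?_
    refine Filter.Eventually.of_forall fun q => ?_
    rw [Real.norm_of_nonneg (by positivity)]
    exact pow_le_pow_left₀ dist_nonneg (hC _ _) 2
  have h1 : ∫ a, dist (Y a) (F (X a)) ^ 2 ∂μ = ∫ q, dist q.2 (F q.1) ^ 2 ∂ρ := by
    rw [hρ, integral_map (hX.prodMk hY).aemeasurable hfmeas.aestronglyMeasurable]
  have h2 := Measure.integral_condKernel (ρ := ρ) hint
  have hfst : ρ.fst = μ.map X := Measure.fst_map_prodMk₀ hY.aemeasurable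
  have hck : condDistrib Y X μ = ρ.condKernel := by rw [condDistrib_def]
  rw [h1, ← h2, hfst, hck]

/-- Identifiability in the Fréchet single index model: under the positive-probability
distinguishability condition and strict uniqueness of the conditional Fréchet means given `X`,
the criterion `W(θ) = E[d²(Y, g(θ'X, θ))]` is uniquely minimized at `θ₀`:
`W(θ) > W(θ₀)` for every unit vector `θ ≠ θ₀`. -/
theorem stmt_8 {α : Type*} [MeasurableSpace α]
    {Ω : Type*} [MetricSpace Ω] [MeasurableSpace Ω] [BorelSpace Ω] [PolishSpace Ω] [Nonempty Ω]
    (hbdd : Bornology.IsBounded (Set.univ : Set Ω))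
    (μ : Measure α) [IsProbabilityMeasure μ] (p : ℕ)
    (X : α → (Fin p → ℝ)) (Y : α → Ω) (hX : Measurable X) (hY : Measurable Y)
    (g : (Fin p → ℝ) → ℝ → Ω) (hgmeas : ∀ θ : Fin p → ℝ, Measurable (g θ))
    (θ₀ : Fin p → ℝ) (hθ₀ : ‖θ₀‖ = 1)
    -- for each unit θ and each x, g(θ'x, θ) minimizes ω ↦ E[d²(Y, ω) | θ'X = θ'x]
    (hg : ∀ θ : Fin p → ℝ, ‖θ‖ = 1 → ∀ x : Fin p → ℝ, ∀ ω : Ω,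
      (∫ y, dist y (g θ (∑ j, θ j * x j)) ^ 2
          ∂((condDistrib Y (fun a => ∑ j, θ j * X a j) μ) (∑ j, θ j * x j)))
        ≤ ∫ y, dist y ω ^ 2
          ∂((condDistrib Y (fun a => ∑ j, θ j * X a j) μ) (∑ j, θ j * x j)))
    -- strict uniqueness of the conditional Fréchet mean given X = x
    (h0 : ∀ x : Fin p → ℝ, ∀ ω : Ω, ω ≠ g θ₀ (∑ j, θ₀ j * x j) →
      (∫ y, dist y (g θ₀ (∑ j, θ₀ j * x j)) ^ 2 ∂((condDistrib Y X μ) x))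
        < ∫ y, dist y ω ^ 2 ∂((condDistrib Y X μ) x))
    -- distinguishability: θ ≠ θ₀ gives different fitted objects with positive probability
    (hdist : ∀ θ : Fin p → ℝ, ‖θ‖ = 1 → θ ≠ θ₀ →
      0 < μ {a | g θ (∑ j, θ j * X a j) ≠ g θ₀ (∑ j, θ₀ j * X a j)}) :
    ∀ θ : Fin p → ℝ, ‖θ‖ = 1 → θ ≠ θ₀ →
      (∫ a, dist (Y a) (g θ₀ (∑ j, θ₀ j * X a j)) ^ 2 ∂μ)
        < ∫ a, dist (Y a) (g θ (∑ j, θ j * X a j)) ^ 2 ∂μ := by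
  intro θ hθ hne
  obtain ⟨C, hC⟩ := Metric.isBounded_iff.mp hbdd
  have hC' : ∀ y ω : Ω, dist y ω ≤ C := fun y ω => hC (Set.mem_univ y) (Set.mem_univ ω)
  have hCnn : (0:ℝ) ≤ C := le_trans dist_nonneg (hC' Classical.ofNonempty Classical.ofNonempty)
  -- the two fitted functions of x
  set F : (Fin p → ℝ) → Ω := fun x => g θ (∑ j, θ j * x j) with hFdef
  set F₀ : (Fin p → ℝ) → Ω := fun x => g θ₀ (∑ j, θ₀ j * x j) with hF₀def
  have hsum : ∀ c : Fin p → ℝ, Measurable (fun x : Fin p → ℝ => ∑ j, c j * x j) := by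
    intro c
    exact Finset.measurable_sum _ fun j _ => by fun_prop
  have hF : Measurable F := (hgmeas θ).comp (hsum θ)
  have hF₀ : Measurable F₀ := (hgmeas θ₀).comp (hsum θ₀)
  set ν := μ.map X with hν
  haveI : IsProbabilityMeasure ν := Measure.isProbabilityMeasure_map hX.aemeasurable
  set κ := condDistrib Y X μ with hκ
  set φ : (Fin p → ℝ) → ℝ := fun x => ∫ y, dist y (F x) ^ 2 ∂(κ x) with hφdef
  set φ₀ : (Fin p → ℝ) → ℝ := fun x => ∫ y, dist y (F₀ x) ^ 2 ∂(κ x) with hφ₀def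
  have key := stmt8_key hC' μ X Y hX hY F hF
  have key₀ := stmt8_key hC' μ X Y hX hY F₀ hF₀
  -- pointwise comparison
  have hle : ∀ x, φ₀ x ≤ φ x := by
    intro x
    by_cases h : F x = F₀ x
    · simp only [hφdef, hφ₀def, h, le_refl]
    · exact le_of_lt (h0 x (F x) h)
  have hltS : ∀ x, F x ≠ F₀ x → φ₀ x < φ x := fun x h => h0 x (F x) h
  -- integrability of φ and φ₀ over ν
  have hint : ∀ (G : (Fin p → ℝ) → Ω), Measurable G →
      Integrable (fun x => ∫ y, dist y (G x) ^ 2 ∂(κ x)) ν := by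
    intro G hG
    have hfmeas : Measurable (fun q : (Fin p → ℝ) × Ω => dist q.2 (G q.1) ^ 2) :=
      ((measurable_dist.comp (measurable_snd.prodMk (hG.comp measurable_fst)))).pow_const 2
    have hmeas : AEStronglyMeasurable (fun x => ∫ y, dist y (G x) ^ 2 ∂(κ x)) ν := by
      exact MeasureTheory.AEStronglyMeasurable.integral_condDistrib_map hY.aemeasurable
        hfmeas.aestronglyMeasurable
    refine (integrable_const (C ^ 2)).mono' hmeas ?_
    refine Filter.Eventually.of_forall fun x => ?_
    haveI : IsProbabilityMeasure (κ x) := by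
      rw [hκ]; infer_instance
    calc ‖∫ y, dist y (G x) ^ 2 ∂(κ x)‖ ≤ C ^ 2 * ((κ x) Set.univ).toReal := by
          refine norm_integral_le_of_norm_le_const ?_
          refine Filter.Eventually.of_forall fun y => ?_
          rw [Real.norm_of_nonneg (by positivity)]
          exact pow_le_pow_left₀ dist_nonneg (hC' _ _) 2
      _ = C ^ 2 := by simp
  have hφint := hint F hF
  have hφ₀int := hint F₀ hF₀
  -- positive measure of the disagreement set
  set S : Set (Fin p → ℝ) := {x | F x ≠ F₀ x} with hSdef
  have hSmeas : MeasurableSet S := by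
    have : MeasurableSet {x | F x = F₀ x} :=
      MeasureTheory.StronglyMeasurable.measurableSet_eq_fun hF.stronglyMeasurable hF₀.stronglyMeasurable
    exact this.compl
  have hνS : 0 < ν S := by
    rw [hν, Measure.map_apply hX hSmeas]
    exact hdist θ hθ hne
  -- strict integral inequality
  have hpos : 0 < ∫ x, (φ x - φ₀ x) ∂ν := by
    rw [integral_pos_iff_support_of_nonneg_ae
      (Filter.Eventually.of_forall fun x => sub_nonneg.mpr (hle x)) (hφint.sub hφ₀int)]
    refine lt_of_lt_of_le hνS (measure_mono ?_)
    intro x hx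
    exact sub_ne_zero.mpr (ne_of_gt (hltS x hx))
  rw [key, key₀]
  have := integral_sub hφint hφ₀int
  change ∫ x, φ₀ x ∂ν < ∫ x, φ x ∂ν
  linarith [hpos, this ▸ hpos]
end
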